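/- arXiv:2509.12023 — 2 statements merged into one kernel-verified Lean document; each statement's English description precedes it below -/
import Mathlib

section
/- (Fractional Sobolev inequality) Let N ≥ 1, s ∈ (0,1) and 1 ≤ p < N/s, and set p*_s := Np/(N−sp). Then there exists a constant C = C(N,s,p) > 0 such that for every u ∈ W^{s,p}(ℝ^N), ‖u‖_{L^{p*_s}(ℝ^N)} ≤ C [u]_{W^{s,p}(ℝ^N)}. In particular u ∈ L^q(ℝ^N) for every q ∈ [p, p*_s]. -/
open MeasureTheory Set Metric Filter
open scoped ENNReal NNReal Topology

noncomputable section

abbrev Rn (N : ℕ) : Type := EuclideanSpace ℝ (Fin N)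

/-- Radius of the ball centered at the origin having volume `m`. -/
def symRadius (N : ℕ) (m : ℝ≥0∞) : ℝ :=
  (m / volume (ball (0 : Rn N) 1)).toReal ^ ((1 : ℝ) / N)

/-- Schwarz symmetrization `A*` of a set: the open ball centered at the origin
with the same volume. -/
def symSet {N : ℕ} (A : Set (Rn N)) : Set (Rn N) :=
  ball 0 (symRadius N (volume A))

/-- Symmetric decreasing rearrangement via the layer-cake formula
`u*(x) = ∫₀^∞ χ_{{u>t}*}(x) dt`. -/
def symDecr {N : ℕ} (u : Rn N → ℝ) (x : Rn N) : ℝ :=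
  (∫⁻ t in Ioi (0 : ℝ), (symSet {y | u y > t}).indicator (fun _ => (1 : ℝ≥0∞)) x).toReal

/-- `u` vanishes at infinity: all superlevel sets have finite measure. -/
def VanishesAtInfinity {N : ℕ} (u : Rn N → ℝ) : Prop :=
  ∀ t > 0, volume {x | u x > t} < ∞

/-- `p`-th power of the Gagliardo seminorm `[u]_{W^{s,p}}^p`. -/
def gagliardoEnergy (N : ℕ) (s p : ℝ) (u : Rn N → ℝ) : ℝ≥0∞ :=
  ∫⁻ x, ∫⁻ y, ENNReal.ofReal (|u x - u y| ^ p / ‖x - y‖ ^ ((N : ℝ) + s * p))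

/-- Gagliardo seminorm `[u]_{W^{s,p}}`. -/
def gagliardoSemi (N : ℕ) (s p : ℝ) (u : Rn N → ℝ) : ℝ≥0∞ :=
  gagliardoEnergy N s p u ^ (1 / p)

/-- Membership in `W^{s,p}(ℝ^N)`. -/
def MemWsp (N : ℕ) (s p : ℝ) (u : Rn N → ℝ) : Prop :=
  MemLp u (ENNReal.ofReal p) volume ∧ gagliardoEnergy N s p u < ∞

/-- The `s`-fractional perimeter. -/
def fracPerimeter (N : ℕ) (s : ℝ) (E : Set (Rn N)) : ℝ≥0∞ :=
  ∫⁻ x in E, ∫⁻ y in Eᶜ, ENNReal.ofReal (1 / ‖x - y‖ ^ ((N : ℝ) + s))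



private lemma min_sub_min_le_of_le {a b : ℝ} (c : ℝ) (h : a ≤ b) :
    min b c - min a c ≤ b - a := by
  have h1 : min b c ≤ min (a + (b - a)) (c + (b - a)) :=
    min_le_min (by linarith) (by linarith)
  rw [min_add_add_right] at h1
  linarith

private lemma abs_min_sub_min_le (a b c : ℝ) : |min a c - min b c| ≤ |a - b| := by
  rcases le_total a b with h | h
  · have h2 : min a c ≤ min b c := min_le_min h le_rfl
    rw [abs_of_nonpos (by linarith), abs_of_nonpos (by linarith)]
    have := min_sub_min_le_of_le c h
    linarith
  · have h2 : min b c ≤ min a c := min_le_min h le_rfl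
    rw [abs_of_nonneg (by linarith), abs_of_nonneg (by linarith)]
    have := min_sub_min_le_of_le c h
    linarith

private lemma nontrivial_Rn {N : ℕ} (hN : 1 ≤ N) : Nontrivial (Rn N) := by
  have h0 : 0 < N := hN
  refine ⟨⟨EuclideanSpace.single ⟨0, h0⟩ 1, 0, fun h => ?_⟩⟩
  have := congrArg (fun f : Rn N => f ⟨0, h0⟩) h
  simp [EuclideanSpace.single_apply] at this

/-- Hölder / power-mean inequality for lintegrals. -/
private lemma lintegral_le_rpow_mul {α : Type*} [MeasurableSpace α] (μ : Measure α)
    {f : α → ℝ≥0∞} (hf : AEMeasurable f μ) {t : ℝ} (ht : 1 ≤ t) :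
    ∫⁻ a, f a ∂μ ≤ (∫⁻ a, f a ^ t ∂μ) ^ (1 / t) * (μ Set.univ) ^ (1 - 1 / t) := by
  rcases eq_or_lt_of_le ht with rfl | ht1
  · simp
  · have hc : t.HolderConjugate (t / (t - 1)) := Real.HolderConjugate.conjExponent ht1
    have h1 : 1 - 1 / t = 1 / (t / (t - 1)) := by
      have := hc.inv_add_inv_eq_inv.trans inv_one
      rw [one_div, one_div]; linarith
    have h2 := ENNReal.lintegral_mul_le_Lp_mul_Lq μ hc hf
      (aemeasurable_const (b := (1 : ℝ≥0∞)))
    simp only [Pi.mul_apply, mul_one, ENNReal.one_rpow, lintegral_one, lintegral_const] at h2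
    rw [h1]
    simpa using h2

private lemma lt_top_of_rpow_lt_top {z : ℝ≥0∞} {e : ℝ} (he : 0 < e) (h : z ^ e < ⊤) : z < ⊤ := by
  rcases eq_or_ne z ⊤ with rfl | hz
  · rw [ENNReal.top_rpow_of_pos he] at h
    exact absurd h (lt_irrefl _)
  · exact lt_top_iff_ne_top.mpr hz

private lemma eLpNorm_eq_ofReal_abs {α : Type*} [MeasurableSpace α] (μ : Measure α)
    (f : α → ℝ) {t : ℝ} (ht : 0 < t) :
    eLpNorm f (ENNReal.ofReal t) μ = (∫⁻ x, (ENNReal.ofReal |f x|) ^ t ∂μ) ^ (1 / t) := by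
  rw [eLpNorm_eq_lintegral_rpow_enorm_toReal (by simp [ENNReal.ofReal_eq_zero, not_le, ht])
      ENNReal.ofReal_ne_top, ENNReal.toReal_ofReal ht.le]
  congr 1
  apply lintegral_congr
  intro x
  rw [← ofReal_norm_eq_enorm, Real.norm_eq_abs]

private lemma aem_ofReal_abs {α : Type*} [MeasurableSpace α] {μ : Measure α} {f : α → ℝ}
    (hf : AEMeasurable f μ) : AEMeasurable (fun x => ENNReal.ofReal |f x|) μ :=
  (continuous_abs.measurable.comp_aemeasurable hf).ennreal_ofReal

/-- Gagliardo inner integral. -/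
private def Ginner (N : ℕ) (s p : ℝ) (v : Rn N → ℝ) (x : Rn N) : ℝ≥0∞ :=
  ∫⁻ y, ENNReal.ofReal (|v x - v y| ^ p / ‖x - y‖ ^ ((N : ℝ) + s * p))

private lemma gagliardo_eq_Ginner (N : ℕ) (s p : ℝ) (v : Rn N → ℝ) :
    gagliardoEnergy N s p v = ∫⁻ x, Ginner N s p v x := rfl

/-- Core inequality, assuming the `L^q` norm is a priori nonzero and finite. -/
private lemma core_ineq {N : ℕ} {s p : ℝ} (hN : 1 ≤ N) (hs0 : 0 < s)
    (hp : 1 ≤ p) (hsp : s * p < N) {v : Rn N → ℝ} (hv : AEMeasurable v volume)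
    (hM0 : eLpNorm v (ENNReal.ofReal ((N : ℝ) * p / ((N : ℝ) - s * p))) volume ≠ 0)
    (hMt : eLpNorm v (ENNReal.ofReal ((N : ℝ) * p / ((N : ℝ) - s * p))) volume ≠ ⊤) :
    eLpNorm v (ENNReal.ofReal ((N : ℝ) * p / ((N : ℝ) - s * p))) volume ≤
      ((volume (ball (0 : Rn N) 1)) ^ (-(1 / p)) +
        (volume (ball (0 : Rn N) 1)) ^ (-(1 / ((N : ℝ) * p / ((N : ℝ) - s * p))))) ^
          (((N : ℝ) * p / ((N : ℝ) - s * p)) * (1 / p)) *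
      gagliardoEnergy N s p v ^ (1 / p) := by
  haveI := nontrivial_Rn hN
  have hN0 : (0 : ℝ) < N := by exact_mod_cast hN
  have hp0 : (0 : ℝ) < p := lt_of_lt_of_le one_pos hp
  have hd : (0 : ℝ) < (N : ℝ) - s * p := by linarith
  set q : ℝ := (N : ℝ) * p / ((N : ℝ) - s * p) with hqdef
  have hq0 : (0 : ℝ) < q := div_pos (mul_pos hN0 hp0) hd
  have hpq : p < q := by
    rw [hqdef, lt_div_iff₀ hd]
    nlinarith [mul_pos (mul_pos hs0 hp0) hp0]
  have hq1 : (1 : ℝ) < q := lt_of_le_of_lt hp hpq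
  -- exponent identities
  have e1 : -(1 / (N : ℝ) * s) + 1 / p = 1 / q := by
    rw [hqdef]; field_simp; ring
  have e2 : p * (1 / (N : ℝ) * s) = 1 - p / q := by
    rw [hqdef]; field_simp; ring
  have e3 : (1 - p / q) * q = q - p := by field_simp
  -- volume of balls
  set ω := volume (ball (0 : Rn N) 1) with hωdef
  have hω0 : ω ≠ 0 := (measure_ball_pos volume _ one_pos).ne'
  have hωt : ω ≠ ⊤ := measure_ball_lt_top.ne
  have hωpow0 : ∀ a : ℝ, ω ^ a ≠ 0 := fun a => by
    simp [ENNReal.rpow_eq_zero_iff, hω0, hωt]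
  have hωpowt : ∀ a : ℝ, ω ^ a ≠ ⊤ := fun a => by
    simp [ENNReal.rpow_eq_top_iff, hω0, hωt]
  set M := eLpNorm v (ENNReal.ofReal q) volume with hMdef
  have heLp : M = (∫⁻ x, (ENNReal.ofReal |v x|) ^ q) ^ (1 / q) :=
    eLpNorm_eq_ofReal_abs volume v hq0
  have hMpow0 : ∀ a : ℝ, M ^ a ≠ 0 := fun a => by
    simp [ENNReal.rpow_eq_zero_iff, hM0, hMt]
  have hMpowt : ∀ a : ℝ, M ^ a ≠ ⊤ := fun a => by
    simp [ENNReal.rpow_eq_top_iff, hM0, hMt]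
  set G := Ginner N s p v with hGdef
  set Acst := ω ^ (-(1 / p)) + ω ^ (-(1 / q)) with hAdef
  have hA0 : Acst ≠ 0 := by
    rw [hAdef]
    intro h
    exact hωpow0 (-(1 / p)) (by simpa using (add_eq_zero.mp h).1)
  have hAt : Acst ≠ ⊤ := by
    rw [hAdef]
    exact ENNReal.add_ne_top.mpr ⟨hωpowt _, hωpowt _⟩
  have hApow0 : ∀ a : ℝ, Acst ^ a ≠ 0 := fun a => by
    simp [ENNReal.rpow_eq_zero_iff, hA0, hAt]
  have hApowt : ∀ a : ℝ, Acst ^ a ≠ ⊤ := fun a => by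
    simp [ENNReal.rpow_eq_top_iff, hA0, hAt]
  have hK0 : Acst ^ q * M ^ (q - p) ≠ 0 := mul_ne_zero (hApow0 _) (hMpow0 _)
  have hKt : Acst ^ q * M ^ (q - p) ≠ ⊤ := ENNReal.mul_ne_top (hApowt _) (hMpowt _)
  -- the key pointwise estimate
  have key : ∀ x : Rn N, ∀ r : ℝ, 0 < r →
      ENNReal.ofReal |v x| ≤
        ω ^ (-(1 / p)) * (ENNReal.ofReal r) ^ s * G x ^ (1 / p)
          + ω ^ (-(1 / q)) * (ENNReal.ofReal r) ^ ((N : ℝ) * (-(1 / q))) * M := by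
    intro x r hr
    set R := ENNReal.ofReal r with hRdef
    have hR0 : R ≠ 0 := (ENNReal.ofReal_pos.mpr hr).ne'
    have hRt : R ≠ ⊤ := ENNReal.ofReal_ne_top
    have hRpowt : ∀ a : ℝ, R ^ a ≠ ⊤ := fun a => by
      simp [ENNReal.rpow_eq_top_iff, hR0, hRt]
    have hB0 : volume (ball x r) ≠ 0 := (measure_ball_pos volume x hr).ne'
    have hBt : volume (ball x r) ≠ ⊤ := measure_ball_lt_top.ne
    have hball : volume (ball x r) = R ^ ((N : ℕ) : ℝ) * ω ^ (1 : ℝ) := by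
      rw [Measure.addHaar_ball volume x hr.le, finrank_euclideanSpace_fin,
        ENNReal.rpow_one]
      congr 1
      rw [hRdef, ENNReal.ofReal_rpow_of_pos hr, Real.rpow_natCast]
    have hpow2 : ∀ a b c : ℝ, (R ^ a * ω ^ b) ^ c = R ^ (a * c) * ω ^ (b * c) :=
      fun a b c => by
        rw [ENNReal.mul_rpow_of_ne_top (hRpowt a) (hωpowt b), ← ENNReal.rpow_mul,
          ← ENNReal.rpow_mul]
    -- P1: triangle inequality
    have P1 : ENNReal.ofReal |v x| * volume (ball x r) ≤
        (∫⁻ y in ball x r, ENNReal.ofReal |v x - v y|) +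
          ∫⁻ y in ball x r, ENNReal.ofReal |v y| := by
      have htri : ∀ y, ENNReal.ofReal |v x| ≤
          ENNReal.ofReal |v x - v y| + ENNReal.ofReal |v y| := fun y => by
        rw [← ENNReal.ofReal_add (abs_nonneg _) (abs_nonneg _)]
        apply ENNReal.ofReal_le_ofReal
        linarith [abs_sub_abs_le_abs_sub (v x) (v y), abs_nonneg (v x - v y)]
      calc ENNReal.ofReal |v x| * volume (ball x r)
          = ∫⁻ _ in ball x r, ENNReal.ofReal |v x| := (setLIntegral_const _ _).symm
        _ ≤ ∫⁻ y in ball x r, (ENNReal.ofReal |v x - v y| + ENNReal.ofReal |v y|) :=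
            lintegral_mono fun y => htri y
        _ = _ := lintegral_add_left'
            ((aem_ofReal_abs ((aemeasurable_const (b := v x)).sub hv)).restrict) _
    -- P2: fractional term
    have P2 : (∫⁻ y in ball x r, ENNReal.ofReal |v x - v y|) ≤
        R ^ (((N : ℝ) + s * p) * (1 / p)) * G x ^ (1 / p) *
          (volume (ball x r)) ^ (1 - 1 / p) := by
      have h1 := lintegral_le_rpow_mul (volume.restrict (ball x r))
        ((aem_ofReal_abs ((aemeasurable_const (b := v x)).sub hv)).restrict) hp
      rw [Measure.restrict_apply_univ] at h1
      refine h1.trans (mul_le_mul_left ?_ _)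
      have h2 : (∫⁻ y in ball x r, (ENNReal.ofReal |v x - v y|) ^ p) ≤
          R ^ ((N : ℝ) + s * p) * G x := by
        have hpt : ∀ y, y ∈ ball x r → (ENNReal.ofReal |v x - v y|) ^ p ≤
            ENNReal.ofReal (r ^ ((N : ℝ) + s * p)) *
              ENNReal.ofReal (|v x - v y| ^ p / ‖x - y‖ ^ ((N : ℝ) + s * p)) := by
          intro y hy
          rw [ENNReal.ofReal_rpow_of_nonneg (abs_nonneg _) hp0.le,
            ← ENNReal.ofReal_mul (Real.rpow_nonneg hr.le _)]
          apply ENNReal.ofReal_le_ofReal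
          rcases eq_or_ne y x with rfl | hne
          · have h0 : |v y - v y| = 0 := by simp
            rw [h0, Real.zero_rpow hp0.ne']
            positivity
          · have hxy0 : (0 : ℝ) < ‖x - y‖ := by
              rw [norm_sub_pos_iff]
              exact fun h => hne (by rw [h])
            have hlt : ‖x - y‖ ≤ r := by
              rw [← dist_eq_norm, dist_comm]
              exact (mem_ball.mp hy).le
            have hk : (0 : ℝ) < ‖x - y‖ ^ ((N : ℝ) + s * p) :=
              Real.rpow_pos_of_pos hxy0 _
            have hkr : ‖x - y‖ ^ ((N : ℝ) + s * p) ≤ r ^ ((N : ℝ) + s * p) :=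
              Real.rpow_le_rpow (norm_nonneg _) hlt (by positivity)
            calc |v x - v y| ^ p
                = (|v x - v y| ^ p / ‖x - y‖ ^ ((N : ℝ) + s * p)) *
                    ‖x - y‖ ^ ((N : ℝ) + s * p) := (div_mul_cancel₀ _ hk.ne').symm
              _ ≤ (|v x - v y| ^ p / ‖x - y‖ ^ ((N : ℝ) + s * p)) *
                    r ^ ((N : ℝ) + s * p) := by
                  apply mul_le_mul_of_nonneg_left hkr
                  positivity
              _ = r ^ ((N : ℝ) + s * p) *
                    (|v x - v y| ^ p / ‖x - y‖ ^ ((N : ℝ) + s * p)) := mul_comm _ _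
        calc (∫⁻ y in ball x r, (ENNReal.ofReal |v x - v y|) ^ p)
            ≤ ∫⁻ y in ball x r, ENNReal.ofReal (r ^ ((N : ℝ) + s * p)) *
                ENNReal.ofReal (|v x - v y| ^ p / ‖x - y‖ ^ ((N : ℝ) + s * p)) := by
              apply lintegral_mono_ae
              rw [ae_restrict_iff' measurableSet_ball]
              exact ae_of_all _ hpt
          _ = ENNReal.ofReal (r ^ ((N : ℝ) + s * p)) *
                ∫⁻ y in ball x r,
                  ENNReal.ofReal (|v x - v y| ^ p / ‖x - y‖ ^ ((N : ℝ) + s * p)) :=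
              lintegral_const_mul' _ _ ENNReal.ofReal_ne_top
          _ ≤ ENNReal.ofReal (r ^ ((N : ℝ) + s * p)) * G x :=
              mul_le_mul_right (setLIntegral_le_lintegral _ _) _
          _ = R ^ ((N : ℝ) + s * p) * G x := by
              rw [hRdef, ENNReal.ofReal_rpow_of_pos hr]
      calc (∫⁻ y in ball x r, (ENNReal.ofReal |v x - v y|) ^ p) ^ (1 / p)
          ≤ (R ^ ((N : ℝ) + s * p) * G x) ^ (1 / p) :=
            ENNReal.rpow_le_rpow h2 (by positivity)
        _ = R ^ (((N : ℝ) + s * p) * (1 / p)) * G x ^ (1 / p) := by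
            rw [ENNReal.mul_rpow_of_nonneg _ _ (by positivity), ← ENNReal.rpow_mul]
    -- P3: Lq term
    have P3 : (∫⁻ y in ball x r, ENNReal.ofReal |v y|) ≤
        M * (volume (ball x r)) ^ (1 - 1 / q) := by
      have h1 := lintegral_le_rpow_mul (volume.restrict (ball x r))
        ((aem_ofReal_abs hv).restrict) hq1.le
      rw [Measure.restrict_apply_univ] at h1
      refine h1.trans (mul_le_mul_left ?_ _)
      rw [heLp]
      exact ENNReal.rpow_le_rpow (setLIntegral_le_lintegral _ _) (by positivity)
    -- combine and divide by the volume of the ball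
    have hcomb := P1.trans (add_le_add P2 P3)
    have hdiv : ENNReal.ofReal |v x| ≤
        (R ^ (((N : ℝ) + s * p) * (1 / p)) * G x ^ (1 / p) *
            (volume (ball x r)) ^ (1 - 1 / p) +
          M * (volume (ball x r)) ^ (1 - 1 / q)) * (volume (ball x r))⁻¹ := by
      have h := (ENNReal.le_div_iff_mul_le (Or.inl hB0) (Or.inl hBt)).mpr hcomb
      rwa [div_eq_mul_inv] at h
    refine hdiv.trans (le_of_eq ?_)
    rw [add_mul, hball, ← ENNReal.rpow_neg_one (R ^ ((N : ℕ) : ℝ) * ω ^ (1 : ℝ)),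
      hpow2, hpow2, hpow2]
    congr 1
    · calc R ^ (((N : ℝ) + s * p) * (1 / p)) * G x ^ (1 / p) *
            (R ^ (((N : ℕ) : ℝ) * (1 - 1 / p)) * ω ^ (1 * (1 - 1 / p))) *
            (R ^ (((N : ℕ) : ℝ) * (-1 : ℝ)) * ω ^ (1 * (-1 : ℝ)))
          = R ^ (((N : ℝ) + s * p) * (1 / p)) * R ^ (((N : ℕ) : ℝ) * (1 - 1 / p)) *
              R ^ (((N : ℕ) : ℝ) * (-1 : ℝ)) *
              (ω ^ (1 * (1 - 1 / p)) * ω ^ (1 * (-1 : ℝ))) * G x ^ (1 / p) := by ring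
        _ = R ^ ((((N : ℝ) + s * p) * (1 / p)) + (((N : ℕ) : ℝ) * (1 - 1 / p)) +
              (((N : ℕ) : ℝ) * (-1 : ℝ))) *
              ω ^ ((1 * (1 - 1 / p)) + 1 * (-1 : ℝ)) * G x ^ (1 / p) := by
            rw [← ENNReal.rpow_add _ _ hR0 hRt, ← ENNReal.rpow_add _ _ hR0 hRt,
              ← ENNReal.rpow_add _ _ hω0 hωt]
        _ = ω ^ (-(1 / p)) * R ^ s * G x ^ (1 / p) := by
            rw [show (((N : ℝ) + s * p) * (1 / p)) + (((N : ℕ) : ℝ) * (1 - 1 / p)) +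
                (((N : ℕ) : ℝ) * (-1 : ℝ)) = s from by field_simp; ring,
              show (1 * (1 - 1 / p)) + 1 * (-1 : ℝ) = -(1 / p) from by ring]
            ring
    · calc M * (R ^ (((N : ℕ) : ℝ) * (1 - 1 / q)) * ω ^ (1 * (1 - 1 / q))) *
            (R ^ (((N : ℕ) : ℝ) * (-1 : ℝ)) * ω ^ (1 * (-1 : ℝ)))
          = R ^ (((N : ℕ) : ℝ) * (1 - 1 / q)) * R ^ (((N : ℕ) : ℝ) * (-1 : ℝ)) *
              (ω ^ (1 * (1 - 1 / q)) * ω ^ (1 * (-1 : ℝ))) * M := by ring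
        _ = R ^ ((((N : ℕ) : ℝ) * (1 - 1 / q)) + (((N : ℕ) : ℝ) * (-1 : ℝ))) *
              ω ^ ((1 * (1 - 1 / q)) + 1 * (-1 : ℝ)) * M := by
            rw [← ENNReal.rpow_add _ _ hR0 hRt, ← ENNReal.rpow_add _ _ hω0 hωt]
        _ = ω ^ (-(1 / q)) * R ^ ((N : ℝ) * (-(1 / q))) * M := by
            rw [show (((N : ℕ) : ℝ) * (1 - 1 / q)) + (((N : ℕ) : ℝ) * (-1 : ℝ)) =
                (N : ℝ) * (-(1 / q)) from by ring,
              show (1 * (1 - 1 / q)) + 1 * (-1 : ℝ) = -(1 / q) from by ring]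
            ring
  -- optimize over r
  have keyE : ∀ x : Rn N, (ENNReal.ofReal |v x|) ^ q ≤ Acst ^ q * M ^ (q - p) * G x := by
    intro x
    rcases eq_or_ne (G x) ⊤ with hGt | hGt
    · rw [hGt, ENNReal.mul_top hK0]
      exact le_top
    · apply ENNReal.le_of_forall_pos_le_add
      intro ε hε _
      set δ := (ε : ℝ≥0∞) / (Acst ^ q * M ^ (q - p)) with hδdef
      have hδ0 : δ ≠ 0 := by
        rw [hδdef]
        simp [ENNReal.div_eq_zero_iff, hKt, hε.ne']
      have hδt : δ ≠ ⊤ := by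
        rw [hδdef]
        simp [ENNReal.div_eq_top, hK0]
      set Gd := max (G x) δ with hGddef
      have hGd0 : Gd ≠ 0 := fun h =>
        hδ0 (le_antisymm (h ▸ le_max_right _ _) zero_le)
      have hGdt : Gd ≠ ⊤ := by
        rw [hGddef]
        exact (max_lt hGt.lt_top hδt.lt_top).ne
      set Z := M ^ p / Gd with hZdef
      have hZ0 : Z ≠ 0 := by
        rw [hZdef]
        simp [ENNReal.div_eq_zero_iff, hMpow0 p, hGdt]
      have hZt : Z ≠ ⊤ := by
        rw [hZdef]
        simp [ENNReal.div_eq_top, hMpowt p, hGd0]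
      have hr : 0 < Z.toReal ^ (1 / (N : ℝ)) :=
        Real.rpow_pos_of_pos (ENNReal.toReal_pos hZ0 hZt) _
      have hRZ : ENNReal.ofReal (Z.toReal ^ (1 / (N : ℝ))) = Z ^ (1 / (N : ℝ)) := by
        rw [ENNReal.toReal_rpow, ENNReal.ofReal_toReal
          (by simp [ENNReal.rpow_eq_top_iff, hZ0, hZt])]
      have hZpow : ∀ a : ℝ, Z ^ a = M ^ (p * a) * Gd ^ (-a) := fun a => by
        rw [hZdef, div_eq_mul_inv,
          ENNReal.mul_rpow_of_ne_zero (hMpow0 p) (ENNReal.inv_ne_zero.mpr hGdt),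
          ← ENNReal.rpow_mul, ← ENNReal.rpow_neg_one Gd, ← ENNReal.rpow_mul, neg_one_mul]
      have h := key x _ hr
      rw [hRZ, ← ENNReal.rpow_mul Z, ← ENNReal.rpow_mul Z,
        show (1 / (N : ℝ)) * ((N : ℝ) * (-(1 / q))) = -(1 / q) from by field_simp,
        hZpow (1 / (N : ℝ) * s), hZpow (-(1 / q))] at h
      have hstep : ENNReal.ofReal |v x| ≤ Acst * M ^ (1 - p / q) * Gd ^ (1 / q) := by
        refine h.trans ?_
        have hG_le : G x ^ (1 / p) ≤ Gd ^ (1 / p) :=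
          ENNReal.rpow_le_rpow (le_max_left _ _) (by positivity)
        calc ω ^ (-(1 / p)) * (M ^ (p * (1 / (N : ℝ) * s)) * Gd ^ (-(1 / (N : ℝ) * s))) *
              G x ^ (1 / p)
              + ω ^ (-(1 / q)) * (M ^ (p * -(1 / q)) * Gd ^ (- -(1 / q))) * M
            ≤ ω ^ (-(1 / p)) * (M ^ (p * (1 / (N : ℝ) * s)) * Gd ^ (-(1 / (N : ℝ) * s))) *
              Gd ^ (1 / p)
              + ω ^ (-(1 / q)) * (M ^ (p * -(1 / q)) * Gd ^ (- -(1 / q))) * M :=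
              add_le_add (mul_le_mul_right hG_le _) le_rfl
          _ = ω ^ (-(1 / p)) * M ^ (p * (1 / (N : ℝ) * s)) *
                (Gd ^ (-(1 / (N : ℝ) * s)) * Gd ^ (1 / p))
              + ω ^ (-(1 / q)) * (M ^ (p * -(1 / q)) * M ^ (1 : ℝ)) * Gd ^ (- -(1 / q)) := by
              rw [ENNReal.rpow_one]; ring
          _ = ω ^ (-(1 / p)) * M ^ (1 - p / q) * Gd ^ (1 / q)
              + ω ^ (-(1 / q)) * M ^ (1 - p / q) * Gd ^ (1 / q) := by
              rw [← ENNReal.rpow_add _ _ hGd0 hGdt, ← ENNReal.rpow_add _ _ hM0 hMt,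
                e1, e2, show p * -(1 / q) + 1 = 1 - p / q from by ring,
                show - -(1 / q) = 1 / q from by ring]
          _ = Acst * M ^ (1 - p / q) * Gd ^ (1 / q) := by
              rw [hAdef]; ring
      calc (ENNReal.ofReal |v x|) ^ q
          ≤ (Acst * M ^ (1 - p / q) * Gd ^ (1 / q)) ^ q :=
            ENNReal.rpow_le_rpow hstep hq0.le
        _ = Acst ^ q * M ^ (q - p) * Gd := by
            rw [ENNReal.mul_rpow_of_nonneg _ _ hq0.le,
              ENNReal.mul_rpow_of_nonneg _ _ hq0.le,
              ← ENNReal.rpow_mul, ← ENNReal.rpow_mul, e3,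
              show (1 / q) * q = 1 from by field_simp, ENNReal.rpow_one]
        _ ≤ Acst ^ q * M ^ (q - p) * (G x + δ) :=
            mul_le_mul_right (max_le le_self_add le_add_self) _
        _ = Acst ^ q * M ^ (q - p) * G x + Acst ^ q * M ^ (q - p) * δ := by
            rw [mul_add]
        _ ≤ Acst ^ q * M ^ (q - p) * G x + ε := by
            refine add_le_add le_rfl (le_of_eq ?_)
            rw [hδdef, ENNReal.mul_div_cancel hK0 hKt]
  -- integrate
  have hInt : (∫⁻ x, (ENNReal.ofReal |v x|) ^ q) ≤
      Acst ^ q * M ^ (q - p) * gagliardoEnergy N s p v := by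
    calc (∫⁻ x, (ENNReal.ofReal |v x|) ^ q)
        ≤ ∫⁻ x, Acst ^ q * M ^ (q - p) * G x := lintegral_mono keyE
      _ = Acst ^ q * M ^ (q - p) * ∫⁻ x, G x := lintegral_const_mul' _ _ hKt
      _ = _ := by rw [gagliardo_eq_Ginner]
  have hMq : M ^ q ≤ Acst ^ q * M ^ (q - p) * gagliardoEnergy N s p v := by
    have hq' : M ^ q = ∫⁻ x, (ENNReal.ofReal |v x|) ^ q := by
      rw [heLp, ← ENNReal.rpow_mul, one_div, inv_mul_cancel₀ hq0.ne', ENNReal.rpow_one]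
    rw [hq']
    exact hInt
  have hcancel : M ^ p ≤ Acst ^ q * gagliardoEnergy N s p v := by
    have h1 : M ^ p * M ^ (q - p) ≤ (Acst ^ q * gagliardoEnergy N s p v) * M ^ (q - p) := by
      rw [← ENNReal.rpow_add _ _ hM0 hMt, show p + (q - p) = q from by ring]
      exact hMq.trans (le_of_eq (by ring))
    exact (ENNReal.mul_le_mul_iff_left (hMpow0 _) (hMpowt _)).mp h1
  calc M = (M ^ p) ^ (1 / p) := by
        rw [← ENNReal.rpow_mul, mul_one_div, div_self hp0.ne', ENNReal.rpow_one]
    _ ≤ (Acst ^ q * gagliardoEnergy N s p v) ^ (1 / p) :=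
        ENNReal.rpow_le_rpow hcancel (by positivity)
    _ = Acst ^ (q * (1 / p)) * gagliardoEnergy N s p v ^ (1 / p) := by
        rw [ENNReal.mul_rpow_of_nonneg _ _ (by positivity), ← ENNReal.rpow_mul]

/-- **Fractional Sobolev inequality.** For `1 ≤ p < N/s` and `p*_s = Np/(N−sp)`,
there is `C = C(N,s,p) > 0` with `‖u‖_{L^{p*_s}} ≤ C [u]_{W^{s,p}}` for every
`u ∈ W^{s,p}(ℝ^N)`; in particular `u ∈ L^q(ℝ^N)` for every `q ∈ [p, p*_s]`. -/
theorem fractional_sobolev_inequality (N : ℕ) (hN : 1 ≤ N) (s p : ℝ)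
    (hs : s ∈ Ioo (0 : ℝ) 1) (hp : 1 ≤ p) (hpN : p < (N : ℝ) / s) :
    ∃ C : ℝ, 0 < C ∧ ∀ u : Rn N → ℝ, MemWsp N s p u →
      (eLpNorm u (ENNReal.ofReal ((N : ℝ) * p / ((N : ℝ) - s * p))) volume ≤
        ENNReal.ofReal C * gagliardoSemi N s p u) ∧
      ∀ q : ℝ, p ≤ q → q ≤ (N : ℝ) * p / ((N : ℝ) - s * p) →
        MemLp u (ENNReal.ofReal q) volume := by
  obtain ⟨hs0, hs1⟩ := hs
  haveI := nontrivial_Rn hN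
  have hN0 : (0 : ℝ) < N := by exact_mod_cast hN
  have hp0 : (0 : ℝ) < p := lt_of_lt_of_le one_pos hp
  have hsp : s * p < N := by
    have := (lt_div_iff₀ hs0).mp hpN
    linarith
  have hd : (0 : ℝ) < (N : ℝ) - s * p := by linarith
  set q : ℝ := (N : ℝ) * p / ((N : ℝ) - s * p) with hqdef
  have hq0 : (0 : ℝ) < q := div_pos (mul_pos hN0 hp0) hd
  have hpq : p < q := by
    rw [hqdef, lt_div_iff₀ hd]
    nlinarith [mul_pos (mul_pos hs0 hp0) hp0]
  set ω := volume (ball (0 : Rn N) 1) with hωdef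
  have hω0 : ω ≠ 0 := (measure_ball_pos volume _ one_pos).ne'
  have hωt : ω ≠ ⊤ := measure_ball_lt_top.ne
  set Acst := ω ^ (-(1 / p)) + ω ^ (-(1 / q)) with hAdef
  have hA0 : Acst ≠ 0 := by
    rw [hAdef]
    intro h
    have h1 := (add_eq_zero.mp h).1
    simp [ENNReal.rpow_eq_zero_iff, hω0, hωt] at h1
  have hAt : Acst ≠ ⊤ := by
    rw [hAdef]
    refine ENNReal.add_ne_top.mpr ⟨?_, ?_⟩ <;>
      simp [ENNReal.rpow_eq_top_iff, hω0, hωt]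
  have hC0 : Acst ^ (q * (1 / p)) ≠ 0 := by
    simp [ENNReal.rpow_eq_zero_iff, hA0, hAt]
  have hCt : Acst ^ (q * (1 / p)) ≠ ⊤ := by
    simp [ENNReal.rpow_eq_top_iff, hA0, hAt]
  refine ⟨(Acst ^ (q * (1 / p))).toReal, ENNReal.toReal_pos hC0 hCt, ?_⟩
  intro u hu
  have hum : AEMeasurable u volume := hu.1.aestronglyMeasurable.aemeasurable
  have hE : gagliardoEnergy N s p u ≠ ⊤ := hu.2.ne
  -- finiteness of the p-integral
  have hup : (∫⁻ x, (ENNReal.ofReal |u x|) ^ p) < ⊤ := by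
    have h1 : eLpNorm u (ENNReal.ofReal p) volume < ⊤ := hu.1.2
    rw [eLpNorm_eq_ofReal_abs volume u hp0] at h1
    by_contra hc
    push_neg at hc
    rw [top_le_iff.mp hc, ENNReal.top_rpow_of_pos (by positivity)] at h1
    exact absurd h1 (lt_irrefl _)
  -- truncations
  set v : ℕ → Rn N → ℝ := fun n x => min |u x| (n : ℝ) with hvdef
  have hvm : ∀ n : ℕ, AEMeasurable (v n) volume := fun n =>
    (continuous_abs.measurable.comp_aemeasurable hum).min aemeasurable_const
  have hvabs : ∀ n x, |v n x| = v n x := fun n x =>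
    abs_of_nonneg (le_min (abs_nonneg _) (Nat.cast_nonneg n))
  have henergy : ∀ n : ℕ, gagliardoEnergy N s p (v n) ≤ gagliardoEnergy N s p u := by
    intro n
    apply lintegral_mono
    intro x
    apply lintegral_mono
    intro y
    apply ENNReal.ofReal_le_ofReal
    have h1 : |v n x - v n y| ≤ |u x - u y| :=
      le_trans (abs_min_sub_min_le _ _ _) (abs_abs_sub_abs_le_abs_sub _ _)
    have h2 : |v n x - v n y| ^ p ≤ |u x - u y| ^ p :=
      Real.rpow_le_rpow (abs_nonneg _) h1 hp0.le
    rw [div_eq_mul_inv, div_eq_mul_inv]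
    exact mul_le_mul_of_nonneg_right h2 (by positivity)
  -- truncations have finite L^q norm
  have hvfin : ∀ n : ℕ, (∫⁻ x, (ENNReal.ofReal |v n x|) ^ q) < ⊤ := by
    intro n
    have hpt : ∀ x, (ENNReal.ofReal |v n x|) ^ q ≤
        ((n : ℝ≥0∞)) ^ (q - p) * (ENNReal.ofReal |u x|) ^ p := by
      intro x
      have hz1 : ENNReal.ofReal |v n x| ≤ (n : ℝ≥0∞) := by
        rw [hvabs, ← ENNReal.ofReal_natCast]
        exact ENNReal.ofReal_le_ofReal (min_le_right _ _)
      have hz2 : ENNReal.ofReal |v n x| ≤ ENNReal.ofReal |u x| := by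
        rw [hvabs]
        exact ENNReal.ofReal_le_ofReal (min_le_left _ _)
      calc (ENNReal.ofReal |v n x|) ^ q
          = (ENNReal.ofReal |v n x|) ^ (q - p) * (ENNReal.ofReal |v n x|) ^ p := by
            rw [← ENNReal.rpow_add_of_nonneg _ _ (by linarith) hp0.le, sub_add_cancel]
        _ ≤ ((n : ℝ≥0∞)) ^ (q - p) * (ENNReal.ofReal |u x|) ^ p :=
            mul_le_mul' (ENNReal.rpow_le_rpow hz1 (by linarith))
              (ENNReal.rpow_le_rpow hz2 hp0.le)
    calc (∫⁻ x, (ENNReal.ofReal |v n x|) ^ q)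
        ≤ ∫⁻ x, ((n : ℝ≥0∞)) ^ (q - p) * (ENNReal.ofReal |u x|) ^ p :=
          lintegral_mono hpt
      _ = ((n : ℝ≥0∞)) ^ (q - p) * ∫⁻ x, (ENNReal.ofReal |u x|) ^ p :=
          lintegral_const_mul' _ _
            (ENNReal.rpow_lt_top_of_nonneg (by linarith) (ENNReal.natCast_ne_top n)).ne
      _ < ⊤ := ENNReal.mul_lt_top
          (ENNReal.rpow_lt_top_of_nonneg (by linarith) (ENNReal.natCast_ne_top n)) hup
  -- apply the core inequality to each truncation
  have key_n : ∀ n : ℕ, eLpNorm (v n) (ENNReal.ofReal q) volume ≤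
      Acst ^ (q * (1 / p)) * gagliardoEnergy N s p u ^ (1 / p) := by
    intro n
    by_cases h0 : eLpNorm (v n) (ENNReal.ofReal q) volume = 0
    · rw [h0]
      exact zero_le
    · have hfin : eLpNorm (v n) (ENNReal.ofReal q) volume ≠ ⊤ := by
        rw [eLpNorm_eq_ofReal_abs volume (v n) hq0]
        exact (ENNReal.rpow_lt_top_of_nonneg (by positivity) (hvfin n).ne).ne
      have h := core_ineq hN hs0 hp hsp (hvm n) h0 hfin
      rw [← hqdef, ← hωdef, ← hAdef] at h
      refine h.trans ?_
      exact mul_le_mul_right (ENNReal.rpow_le_rpow (henergy n) (by positivity)) _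
  -- monotone convergence
  have hsup : (∫⁻ x, (ENNReal.ofReal |u x|) ^ q) =
      ⨆ n : ℕ, ∫⁻ x, (ENNReal.ofReal |v n x|) ^ q := by
    rw [← lintegral_iSup' (fun n => (aem_ofReal_abs (hvm n)).pow_const q)
      (ae_of_all _ (fun x n m hnm => by
        simp only [hvabs]
        exact ENNReal.rpow_le_rpow (ENNReal.ofReal_le_ofReal
          (min_le_min le_rfl (Nat.cast_le.mpr hnm))) hq0.le))]
    apply lintegral_congr
    intro x
    apply le_antisymm
    · have hx : ENNReal.ofReal |u x| = ENNReal.ofReal |v ⌈|u x|⌉₊ x| := by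
        rw [hvabs, hvdef]
        simp only []
        rw [min_eq_left (Nat.le_ceil _)]
      rw [hx]
      exact le_iSup (fun n : ℕ => (ENNReal.ofReal |v n x|) ^ q) ⌈|u x|⌉₊
    · refine iSup_le fun n => ?_
      refine ENNReal.rpow_le_rpow (ENNReal.ofReal_le_ofReal ?_) hq0.le
      rw [hvabs]
      exact min_le_left _ _
  -- part 1
  have hpart1 : eLpNorm u (ENNReal.ofReal q) volume ≤
      Acst ^ (q * (1 / p)) * gagliardoEnergy N s p u ^ (1 / p) := by
    have hsuff : (∫⁻ x, (ENNReal.ofReal |u x|) ^ q) ≤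
        (Acst ^ (q * (1 / p)) * gagliardoEnergy N s p u ^ (1 / p)) ^ q := by
      rw [hsup]
      refine iSup_le fun n => ?_
      have h2 : (∫⁻ x, (ENNReal.ofReal |v n x|) ^ q) =
          (eLpNorm (v n) (ENNReal.ofReal q) volume) ^ q := by
        rw [eLpNorm_eq_ofReal_abs volume (v n) hq0, ← ENNReal.rpow_mul,
          one_div, inv_mul_cancel₀ hq0.ne', ENNReal.rpow_one]
      rw [h2]
      exact ENNReal.rpow_le_rpow (key_n n) hq0.le
    rw [eLpNorm_eq_ofReal_abs volume u hq0]
    calc (∫⁻ x, (ENNReal.ofReal |u x|) ^ q) ^ (1 / q)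
        ≤ ((Acst ^ (q * (1 / p)) * gagliardoEnergy N s p u ^ (1 / p)) ^ q) ^ (1 / q) :=
          ENNReal.rpow_le_rpow hsuff (by positivity)
      _ = Acst ^ (q * (1 / p)) * gagliardoEnergy N s p u ^ (1 / p) := by
          rw [← ENNReal.rpow_mul, show q * (1 / q) = 1 from by field_simp,
            ENNReal.rpow_one]
  have hpart1' : eLpNorm u (ENNReal.ofReal q) volume ≤
      ENNReal.ofReal ((Acst ^ (q * (1 / p))).toReal) * gagliardoSemi N s p u := by
    rw [ENNReal.ofReal_toReal hCt]
    exact hpart1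
  refine ⟨hpart1', ?_⟩
  -- part 2: interpolation
  intro t ht1 ht2
  have ht0 : 0 < t := lt_of_lt_of_le hp0 ht1
  have huq : (∫⁻ x, (ENNReal.ofReal |u x|) ^ q) < ⊤ := by
    have h1 : eLpNorm u (ENNReal.ofReal q) volume < ⊤ :=
      lt_of_le_of_lt hpart1 (ENNReal.mul_lt_top hCt.lt_top
        (ENNReal.rpow_lt_top_of_nonneg (by positivity) hE))
    rw [eLpNorm_eq_ofReal_abs volume u hq0] at h1
    by_contra hc
    push_neg at hc
    rw [top_le_iff.mp hc, ENNReal.top_rpow_of_pos (by positivity)] at h1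
    exact absurd h1 (lt_irrefl _)
  refine ⟨hu.1.1, ?_⟩
  rw [eLpNorm_eq_ofReal_abs volume u ht0]
  refine ENNReal.rpow_lt_top_of_nonneg (by positivity) ?_
  have hpt : ∀ x, (ENNReal.ofReal |u x|) ^ t ≤
      (ENNReal.ofReal |u x|) ^ p + (ENNReal.ofReal |u x|) ^ q := by
    intro x
    rcases le_total (ENNReal.ofReal |u x|) 1 with hz | hz
    · exact le_trans (ENNReal.rpow_le_rpow_of_exponent_ge hz ht1) le_self_add
    · exact le_trans (ENNReal.rpow_le_rpow_of_exponent_le hz ht2) le_add_self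
  have hsum : (∫⁻ x, (ENNReal.ofReal |u x|) ^ t) ≤
      (∫⁻ x, (ENNReal.ofReal |u x|) ^ p) + ∫⁻ x, (ENNReal.ofReal |u x|) ^ q := by
    calc (∫⁻ x, (ENNReal.ofReal |u x|) ^ t)
        ≤ ∫⁻ x, ((ENNReal.ofReal |u x|) ^ p + (ENNReal.ofReal |u x|) ^ q) :=
          lintegral_mono hpt
      _ = _ := lintegral_add_left' ((aem_ofReal_abs hum).pow_const p) _
  exact (lt_of_le_of_lt hsum (ENNReal.add_lt_top.mpr ⟨hup, huq⟩)).ne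
end
end

section
/- (Truncation decomposition of the one-sided Gaussian energy) Let N ≥ 1, 1 ≤ p < ∞, let u : ℝ^N → [0,∞) be measurable, let M > 0, and set u_M := min(u, M) and v_M := u − u_M. Define, for t > 0 and a measurable w : ℝ^N → ℝ, I_t^+[w] := ∫_{ℝ^N}∫_{ℝ^N} ((w(x)−w(y))_+)^p e^{−t|x−y|²} dx dy, and define F_M(v, a) := ((v + M − a)_+)^p − (v_+)^p − ((M − a)_+)^p. Then for every t > 0 the exact identity holds in [0,∞]: I_t^+[u] = I_t^+[u_M] + I_t^+[v_M] + ∫_{ℝ^N}∫_{ℝ^N} F_M(v_M(x), u_M(y)) e^{−t|x−y|²} dx dy, where all three terms on the right-hand side are nonnegative (in particular F_M(v, a) ≥ 0 whenever v ≥ 0 and 0 ≤ a ≤ M). -/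
open MeasureTheory Set Metric Filter
open scoped ENNReal NNReal Topology

set_option maxHeartbeats 2000000

noncomputable section

private theorem rpow_superadd {p : ℝ} (hp : 1 ≤ p) {a b : ℝ} (ha : 0 ≤ a) (hb : 0 ≤ b) :
    a ^ p + b ^ p ≤ (a + b) ^ p := by
  lift a to ℝ≥0 using ha
  lift b to ℝ≥0 using hb
  exact_mod_cast NNReal.add_rpow_le_rpow_add a b hp

private theorem key_id (p : ℝ) (hp : 1 ≤ p) (M : ℝ) (ux uy : ℝ) :
    max (ux - uy) 0 ^ p =
      max (min ux M - min uy M) 0 ^ p +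
      max ((ux - min ux M) - (uy - min uy M)) 0 ^ p +
      (max ((ux - min ux M) + M - min uy M) 0 ^ p
        - max (ux - min ux M) 0 ^ p - max (M - min uy M) 0 ^ p) := by
  have hp0 : p ≠ 0 := by linarith
  have hz : (0:ℝ) ^ p = 0 := Real.zero_rpow hp0
  rcases le_total ux M with h1 | h1 <;> rcases le_total uy M with h2 | h2
  · rw [min_eq_left h1, min_eq_left h2]
    simp [sub_self, hz]
  · rw [min_eq_left h1, min_eq_right h2]
    rw [max_eq_right (by linarith : ux - uy ≤ 0), hz]
    rw [max_eq_right (by linarith : ux - M ≤ 0), hz]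
    rw [max_eq_right (by linarith : ux - ux - (uy - M) ≤ 0), hz]
    rw [show ux - ux + M - M = 0 by ring, max_eq_left le_rfl, hz]
    simp [sub_self, hz]
  · rw [min_eq_right h1, min_eq_left h2]
    rw [show ux - M - (uy - uy) = ux - M by ring]
    rw [show ux - M + M - uy = ux - uy by ring]
    rw [max_eq_left (by linarith : (0:ℝ) ≤ ux - uy)]
    rw [max_eq_left (by linarith : (0:ℝ) ≤ M - uy)]
    rw [max_eq_left (by linarith : (0:ℝ) ≤ ux - M)]
    ring
  · rw [min_eq_right h1, min_eq_right h2]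
    rw [show ux - M - (uy - M) = ux - uy by ring]
    rw [show ux - M + M - M = ux - M by ring]
    rw [max_eq_left (by linarith : (0:ℝ) ≤ ux - M)]
    simp [sub_self, hz]

/-- **Truncation decomposition of the one-sided Gaussian energy.** With
`u_M = min(u,M)`, `v_M = u − u_M`,
`I_t^+[w] = ∫∫ ((w(x)−w(y))_+)^p e^{−t|x−y|²} dx dy` and
`F_M(v,a) = ((v+M−a)_+)^p − (v_+)^p − ((M−a)_+)^p`, one has `F_M(v,a) ≥ 0`
for `v ≥ 0`, `0 ≤ a ≤ M`, and the exact identity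
`I_t^+[u] = I_t^+[u_M] + I_t^+[v_M] + ∫∫ F_M(v_M(x), u_M(y)) e^{−t|x−y|²} dx dy`
holds in `[0,∞]`. -/
theorem truncation_decomposition_one_sided_energy (N : ℕ) (hN : 1 ≤ N) (p : ℝ)
    (hp : 1 ≤ p) (u : Rn N → ℝ) (hmeas : Measurable u) (hpos : ∀ x, 0 ≤ u x)
    (M : ℝ) (hM : 0 < M) (t : ℝ) (ht : 0 < t)
    (uM vM : Rn N → ℝ) (huM : uM = fun x => min (u x) M)
    (hvM : vM = fun x => u x - min (u x) M) :
    (∀ v a : ℝ, 0 ≤ v → 0 ≤ a → a ≤ M →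
      0 ≤ max (v + M - a) 0 ^ p - max v 0 ^ p - max (M - a) 0 ^ p) ∧
    (∫⁻ x, ∫⁻ y, ENNReal.ofReal
        (max (u x - u y) 0 ^ p * Real.exp (-t * ‖x - y‖ ^ 2))) =
      (∫⁻ x, ∫⁻ y, ENNReal.ofReal
          (max (uM x - uM y) 0 ^ p * Real.exp (-t * ‖x - y‖ ^ 2))) +
      (∫⁻ x, ∫⁻ y, ENNReal.ofReal
          (max (vM x - vM y) 0 ^ p * Real.exp (-t * ‖x - y‖ ^ 2))) +
      ∫⁻ x, ∫⁻ y, ENNReal.ofReal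
          ((max (vM x + M - uM y) 0 ^ p - max (vM x) 0 ^ p - max (M - uM y) 0 ^ p) *
            Real.exp (-t * ‖x - y‖ ^ 2)) := by
  subst huM hvM
  have hp0 : (0:ℝ) ≤ p := by linarith
  have hF : ∀ v a : ℝ, 0 ≤ v → 0 ≤ a → a ≤ M →
      0 ≤ max (v + M - a) 0 ^ p - max v 0 ^ p - max (M - a) 0 ^ p := by
    intro v a hv ha haM
    rw [max_eq_left hv, max_eq_left (by linarith), max_eq_left (by linarith)]
    have h := rpow_superadd hp hv (by linarith : (0:ℝ) ≤ M - a)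
    have heq : v + (M - a) = v + M - a := by ring
    rw [heq] at h
    linarith
  refine ⟨hF, ?_⟩
  beta_reduce
  have hrpow : Continuous fun z : ℝ => z ^ p := Real.continuous_rpow_const hp0
  have hexpm : Measurable fun q : Rn N × Rn N => Real.exp (-t * ‖q.1 - q.2‖ ^ 2) :=
    Real.continuous_exp.measurable.comp
      (measurable_const.mul (((measurable_fst.sub measurable_snd).norm).pow measurable_const))
  have huMm : Measurable fun x => min (u x) M := hmeas.min measurable_const
  have hvMm : Measurable fun x => u x - min (u x) M := hmeas.sub huMm
  have hBm : Measurable fun q : Rn N × Rn N =>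
      ENNReal.ofReal (max (min (u q.1) M - min (u q.2) M) 0 ^ p
        * Real.exp (-t * ‖q.1 - q.2‖ ^ 2)) :=
    ENNReal.measurable_ofReal.comp
      ((hrpow.measurable.comp ((((huMm.comp measurable_fst).sub
        (huMm.comp measurable_snd))).max measurable_const)).mul hexpm)
  have hCm : Measurable fun q : Rn N × Rn N =>
      ENNReal.ofReal (max ((u q.1 - min (u q.1) M) - (u q.2 - min (u q.2) M)) 0 ^ p
        * Real.exp (-t * ‖q.1 - q.2‖ ^ 2)) :=
    ENNReal.measurable_ofReal.comp
      ((hrpow.measurable.comp ((((hvMm.comp measurable_fst).sub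
        (hvMm.comp measurable_snd))).max measurable_const)).mul hexpm)
  have hDm : Measurable fun q : Rn N × Rn N =>
      ENNReal.ofReal ((max ((u q.1 - min (u q.1) M) + M - min (u q.2) M) 0 ^ p
          - max (u q.1 - min (u q.1) M) 0 ^ p - max (M - min (u q.2) M) 0 ^ p)
        * Real.exp (-t * ‖q.1 - q.2‖ ^ 2)) :=
    ENNReal.measurable_ofReal.comp
      ((((hrpow.measurable.comp ((((hvMm.comp measurable_fst).add
            measurable_const).sub (huMm.comp measurable_snd)).max measurable_const)).sub
        (hrpow.measurable.comp ((hvMm.comp measurable_fst).max measurable_const))).sub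
        (hrpow.measurable.comp ((measurable_const.sub
          (huMm.comp measurable_snd)).max measurable_const))).mul hexpm)
  have hsplit : ∀ x y : Rn N,
      ENNReal.ofReal (max (u x - u y) 0 ^ p * Real.exp (-t * ‖x - y‖ ^ 2)) =
        ENNReal.ofReal (max (min (u x) M - min (u y) M) 0 ^ p
            * Real.exp (-t * ‖x - y‖ ^ 2))
        + ENNReal.ofReal (max ((u x - min (u x) M) - (u y - min (u y) M)) 0 ^ p
            * Real.exp (-t * ‖x - y‖ ^ 2))
        + ENNReal.ofReal ((max ((u x - min (u x) M) + M - min (u y) M) 0 ^ p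
            - max (u x - min (u x) M) 0 ^ p - max (M - min (u y) M) 0 ^ p)
            * Real.exp (-t * ‖x - y‖ ^ 2)) := by
    intro x y
    have hepos : (0:ℝ) ≤ Real.exp (-t * ‖x - y‖ ^ 2) := (Real.exp_pos _).le
    have hBnn : (0:ℝ) ≤ max (min (u x) M - min (u y) M) 0 ^ p :=
      Real.rpow_nonneg (le_max_right _ _) p
    have hCnn : (0:ℝ) ≤ max ((u x - min (u x) M) - (u y - min (u y) M)) 0 ^ p :=
      Real.rpow_nonneg (le_max_right _ _) p
    have hDnn : (0:ℝ) ≤ max ((u x - min (u x) M) + M - min (u y) M) 0 ^ p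
        - max (u x - min (u x) M) 0 ^ p - max (M - min (u y) M) 0 ^ p :=
      hF _ _ (by simp [min_le_left]) (le_min (hpos y) hM.le) (min_le_right _ _)
    rw [show max (u x - u y) 0 ^ p * Real.exp (-t * ‖x - y‖ ^ 2)
        = max (min (u x) M - min (u y) M) 0 ^ p * Real.exp (-t * ‖x - y‖ ^ 2)
          + max ((u x - min (u x) M) - (u y - min (u y) M)) 0 ^ p
            * Real.exp (-t * ‖x - y‖ ^ 2)
          + (max ((u x - min (u x) M) + M - min (u y) M) 0 ^ p
              - max (u x - min (u x) M) 0 ^ p - max (M - min (u y) M) 0 ^ p)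
            * Real.exp (-t * ‖x - y‖ ^ 2) by
        rw [key_id p hp M (u x) (u y)]; ring]
    rw [ENNReal.ofReal_add (by positivity) (mul_nonneg hDnn hepos),
      ENNReal.ofReal_add (mul_nonneg hBnn hepos) (mul_nonneg hCnn hepos)]
  simp_rw [hsplit]
  have inner : ∀ x : Rn N,
      (∫⁻ y, ENNReal.ofReal (max (min (u x) M - min (u y) M) 0 ^ p
            * Real.exp (-t * ‖x - y‖ ^ 2))
        + ENNReal.ofReal (max ((u x - min (u x) M) - (u y - min (u y) M)) 0 ^ p
            * Real.exp (-t * ‖x - y‖ ^ 2))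
        + ENNReal.ofReal ((max ((u x - min (u x) M) + M - min (u y) M) 0 ^ p
            - max (u x - min (u x) M) 0 ^ p - max (M - min (u y) M) 0 ^ p)
            * Real.exp (-t * ‖x - y‖ ^ 2))) =
      (∫⁻ y, ENNReal.ofReal (max (min (u x) M - min (u y) M) 0 ^ p
            * Real.exp (-t * ‖x - y‖ ^ 2)))
        + (∫⁻ y, ENNReal.ofReal (max ((u x - min (u x) M) - (u y - min (u y) M)) 0 ^ p
            * Real.exp (-t * ‖x - y‖ ^ 2)))
        + (∫⁻ y, ENNReal.ofReal ((max ((u x - min (u x) M) + M - min (u y) M) 0 ^ p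
            - max (u x - min (u x) M) 0 ^ p - max (M - min (u y) M) 0 ^ p)
            * Real.exp (-t * ‖x - y‖ ^ 2))) := by
    intro x
    have hex : Measurable fun y : Rn N => Real.exp (-t * ‖x - y‖ ^ 2) :=
      (Real.continuous_exp.comp
        (continuous_const.mul
          (((continuous_const.sub continuous_id).norm).pow 2))).measurable
    have hDx : Measurable fun y : Rn N =>
        ENNReal.ofReal ((max ((u x - min (u x) M) + M - min (u y) M) 0 ^ p
            - max (u x - min (u x) M) 0 ^ p - max (M - min (u y) M) 0 ^ p)
            * Real.exp (-t * ‖x - y‖ ^ 2)) :=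
      ENNReal.measurable_ofReal.comp
        ((((hrpow.measurable.comp
              ((measurable_const.sub huMm).max measurable_const)).sub measurable_const).sub
          (hrpow.measurable.comp
            ((measurable_const.sub huMm).max measurable_const))).mul hex)
    have hCx : Measurable fun y : Rn N =>
        ENNReal.ofReal (max ((u x - min (u x) M) - (u y - min (u y) M)) 0 ^ p
            * Real.exp (-t * ‖x - y‖ ^ 2)) :=
      ENNReal.measurable_ofReal.comp
        ((hrpow.measurable.comp
          ((measurable_const.sub hvMm).max measurable_const)).mul hex)
    rw [lintegral_add_right _ hDx, lintegral_add_right _ hCx]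
  simp_rw [inner]
  rw [lintegral_add_right _ hDm.lintegral_prod_right']
  rw [lintegral_add_right _ hCm.lintegral_prod_right']
end
end
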